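/- Assume m₁, ..., m_N are regular moment sequences of respective orders s₁, ..., s_N > 0, and write ∂_{m;x}^q = ∂_{m₁;x₁}^{q₁} ⋯ ∂_{m_N;x_N}^{q_N} for q ∈ ℕ^N. Then for all α ∈ [1,∞)^N and all q ∈ ℕ^N there exists a constant C > 0 (depending only on m₁,...,m_N) such that for every f analytic on D_{ρ₁,...,ρ_N} and every 0 < r < min(ρ₁,...,ρ_N): ‖∂_{m;x}^q f‖_{α+q,r,s} ≤ C^{λ(q)} · ( ∏_{d=1}^N q_d!^{s_d} · binom(α_d+q_d−1, q_d)^{s_d} ) · ‖f‖_{α,r,s}, where λ(q) = q₁+⋯+q_N and the d-th factor is interpreted as 1 when q_d = 0. -/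

import Mathlib

/-- A regular moment sequence of order `s > 0`. -/
def IsRegularMomentSeq (m : ℕ → ℝ) (s : ℝ) : Prop :=
  m 0 = 1 ∧ (∀ j, 0 < m j) ∧
    ∃ a A : ℝ, 0 < a ∧ 0 < A ∧ ∀ j : ℕ,
      a * ((j : ℝ) + 1) ^ s ≤ m (j + 1) / m j ∧ m (j + 1) / m j ≤ A * ((j : ℝ) + 1) ^ s

/-- Generalized binomial coefficient `binom(α+j−1, j) = (∏_{i=0}^{j−1}(α+i))/j!`. -/
noncomputable def genBinom (α : ℝ) (j : ℕ) : ℝ :=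
  (∏ i ∈ Finset.range j, (α + i)) / (j.factorial : ℝ)

/-- Taylor coefficients of an analytic function on the polydisc `D_{ρ₁,...,ρ_N}`. -/
def AnalyticCoeffs {N : ℕ} (ρ : Fin N → ℝ) (f : (Fin N → ℕ) → ℂ) : Prop :=
  ∀ r : Fin N → ℝ, (∀ d, 0 ≤ r d) → (∀ d, r d < ρ d) →
    Summable fun J : Fin N → ℕ => ‖f J‖ * ∏ d, r d ^ J d

/-- The majorization set defining the modified Nagumo norm for `α ≠ 0`. -/
def nagumoSet {N : ℕ} (f : (Fin N → ℕ) → ℂ) (α : Fin N → ℝ) (r : ℝ) (s : Fin N → ℝ) :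
    Set ℝ :=
  {A : ℝ | 0 ≤ A ∧ ∀ J : Fin N → ℕ,
    ‖f J‖ ≤ A * ∏ d, r ^ (-(α d)) * genBinom (α d) (J d) ^ s d * (r ^ J d)⁻¹}

open Classical in
/-- The modified Nagumo norm `‖f‖_{α,r,s}`. -/
noncomputable def nagumoNorm {N : ℕ} (f : (Fin N → ℕ) → ℂ) (α : Fin N → ℝ) (r : ℝ)
    (s : Fin N → ℝ) : ℝ :=
  if α = 0 then ∑' J : Fin N → ℕ, ‖f J‖ * r ^ (∑ d, J d)
  else sInf (nagumoSet f α r s)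

/-- The iterated moment derivative `∂_{m;x}^q = ∂_{m₁;x₁}^{q₁} ⋯ ∂_{m_N;x_N}^{q_N}`, acting
coefficientwise: the coefficient of `x^J` in `∂_{m;x}^q f` is
`f_{J+q} · ∏_d m_d(J_d+q_d)/m_d(J_d)`. -/
noncomputable def momentDerivQ {N : ℕ} (m : Fin N → ℕ → ℝ) (q : Fin N → ℕ)
    (f : (Fin N → ℕ) → ℂ) : (Fin N → ℕ) → ℂ :=
  fun J => f (J + q) * ((∏ d, m d (J d + q d) / m d (J d) : ℝ) : ℂ)

section NagumoAux
open Finset Real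


lemma prod_alpha_pos {α : ℝ} (hα : 0 < α) (j : ℕ) :
    0 < ∏ i ∈ Finset.range j, (α + (i : ℝ)) :=
  Finset.prod_pos fun i _ => by positivity

lemma genBinom_pos {α : ℝ} (hα : 0 < α) (j : ℕ) : 0 < genBinom α j :=
  div_pos (prod_alpha_pos hα j) (by exact_mod_cast j.factorial_pos)

lemma factorial_eq_prod (n : ℕ) : (n.factorial : ℝ) = ∏ i ∈ range n, ((i : ℝ) + 1) := by
  rw [← Finset.prod_range_add_one_eq_factorial]
  push_cast; rfl

lemma one_le_genBinom {α : ℝ} (hα : 1 ≤ α) (j : ℕ) : 1 ≤ genBinom α j := by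
  rw [genBinom, le_div_iff₀ (by exact_mod_cast j.factorial_pos), one_mul,
    factorial_eq_prod]
  refine Finset.prod_le_prod (fun i _ => by positivity) (fun i _ => by linarith)

lemma ratio_le (m : ℕ → ℝ) (s A : ℝ) (hm0 : ∀ j, 0 < m j)
    (hAb : ∀ j : ℕ, m (j + 1) / m j ≤ A * ((j : ℝ) + 1) ^ s) (J q : ℕ) :
    m (J + q) / m J ≤ ∏ i ∈ Finset.range q, (A * (((J + i : ℕ) : ℝ) + 1) ^ s) := by
  induction q with
  | zero => simp [div_self (hm0 J).ne']
  | succ k ih =>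
    have h1 : m (J + (k + 1)) / m J = (m (J + k) / m J) * (m ((J + k) + 1) / m (J + k)) := by
      rw [div_mul_div_comm, mul_comm (m (J+k)), mul_div_mul_right _ _ (hm0 (J+k)).ne']
      rfl
    rw [Finset.prod_range_succ, h1]
    exact mul_le_mul ih (hAb (J + k)) (le_of_lt (div_pos (hm0 _) (hm0 _)))
      (Finset.prod_nonneg fun i _ =>
        le_trans (le_of_lt (div_pos (hm0 (J + i + 1)) (hm0 (J + i)))) (hAb (J + i)))

lemma rpow_split {r : ℝ} (hr : 0 < r) (α : ℝ) (J q : ℕ) :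
    r ^ (-(α + (q : ℝ))) * ((r : ℝ) ^ J)⁻¹ = r ^ (-α) * ((r : ℝ) ^ (J + q))⁻¹ := by
  rw [neg_add, Real.rpow_add hr, Real.rpow_neg hr.le (q:ℝ), Real.rpow_natCast, pow_add, mul_inv]
  ring

lemma coord_key (m : ℕ → ℝ) (s α A : ℝ) (hs : 0 ≤ s) (hα : 1 ≤ α)
    (hm0 : ∀ j, 0 < m j)
    (hAb : ∀ j : ℕ, m (j + 1) / m j ≤ A * ((j : ℝ) + 1) ^ s) (J q : ℕ) :
    genBinom α (J + q) ^ s * (m (J + q) / m J) ≤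
      A ^ q * (((q.factorial : ℝ)) ^ s * genBinom α q ^ s) * genBinom (α + (q : ℝ)) J ^ s := by
  have hα0 : (0:ℝ) < α := by linarith
  have hαq : (0:ℝ) < α + q := by have : (0:ℝ) ≤ q := Nat.cast_nonneg q; linarith
  set R : ℝ := ∏ i ∈ Finset.range q, (((J + i : ℕ) : ℝ) + 1) with hRdef
  have hRpos : 0 < R := Finset.prod_pos fun i _ => by positivity
  have h2 : ∏ i ∈ Finset.range q, (A * (((J + i : ℕ) : ℝ) + 1) ^ s) = A ^ q * R ^ s := by
    rw [Finset.prod_mul_distrib, Finset.prod_const, Finset.card_range,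
      Real.finset_prod_rpow _ _ (fun i _ => by positivity) s]
  have h1 : m (J + q) / m J ≤ A ^ q * R ^ s := h2 ▸ ratio_le m s A hm0 hAb J q
  have hf : ((J + q).factorial : ℝ) = (J.factorial : ℝ) * R := by
    have : (J + q).factorial = J.factorial * ∏ i ∈ Finset.range q, (J + i + 1) := by
      rw [← Finset.prod_range_add_one_eq_factorial, ← Finset.prod_range_add_one_eq_factorial,
        Finset.prod_range_add]
    rw [this]; push_cast [hRdef]; ring
  have hp : ∏ i ∈ Finset.range (J + q), (α + (i : ℝ)) =
      (∏ i ∈ Finset.range q, (α + (i : ℝ))) * ∏ i ∈ Finset.range J, ((α + (q : ℝ)) + (i : ℝ)) := by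
    rw [add_comm J q, Finset.prod_range_add]
    congr 1
    refine Finset.prod_congr rfl fun i _ => by push_cast; ring
  have hid : genBinom α (J + q) * R = (q.factorial : ℝ) * genBinom α q * genBinom (α + (q : ℝ)) J := by
    have hJf : (J.factorial : ℝ) ≠ 0 := by exact_mod_cast J.factorial_ne_zero
    have hqf : (q.factorial : ℝ) ≠ 0 := by exact_mod_cast q.factorial_ne_zero
    rw [genBinom, genBinom, genBinom, hp, hf]
    field_simp
  calc genBinom α (J + q) ^ s * (m (J + q) / m J)
      ≤ genBinom α (J + q) ^ s * (A ^ q * R ^ s) :=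
        mul_le_mul_of_nonneg_left h1 (Real.rpow_nonneg (genBinom_pos hα0 _).le s)
    _ = A ^ q * (genBinom α (J + q) * R) ^ s := by
        rw [Real.mul_rpow (genBinom_pos hα0 _).le hRpos.le]; ring
    _ = A ^ q * (((q.factorial : ℝ)) ^ s * genBinom α q ^ s) * genBinom (α + (q : ℝ)) J ^ s := by
        rw [hid, Real.mul_rpow (mul_nonneg (Nat.cast_nonneg _) (genBinom_pos hα0 _).le)
            (genBinom_pos hαq _).le,
          Real.mul_rpow (Nat.cast_nonneg _) (genBinom_pos hα0 _).le]
        ring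

lemma coord_full (m : ℕ → ℝ) (s α A r : ℝ) (hs : 0 ≤ s) (hα : 1 ≤ α) (hr : 0 < r)
    (hm0 : ∀ j, 0 < m j)
    (hAb : ∀ j : ℕ, m (j + 1) / m j ≤ A * ((j : ℝ) + 1) ^ s) (J q : ℕ) :
    (r ^ (-α) * genBinom α (J + q) ^ s * ((r : ℝ) ^ (J + q))⁻¹) * (m (J + q) / m J) ≤
      (A ^ q * (((q.factorial : ℝ)) ^ s * genBinom α q ^ s)) *
        (r ^ (-(α + (q : ℝ))) * genBinom (α + (q : ℝ)) J ^ s * ((r : ℝ) ^ J)⁻¹) := by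
  have hc : (0:ℝ) < r ^ (-α) * ((r : ℝ) ^ (J + q))⁻¹ :=
    mul_pos (Real.rpow_pos_of_pos hr _) (inv_pos.mpr (pow_pos hr _))
  have key := coord_key m s α A hs hα hm0 hAb J q
  calc (r ^ (-α) * genBinom α (J + q) ^ s * ((r : ℝ) ^ (J + q))⁻¹) * (m (J + q) / m J)
      = (r ^ (-α) * ((r : ℝ) ^ (J + q))⁻¹) * (genBinom α (J + q) ^ s * (m (J + q) / m J)) := by
        ring
    _ ≤ (r ^ (-α) * ((r : ℝ) ^ (J + q))⁻¹) *
        (A ^ q * (((q.factorial : ℝ)) ^ s * genBinom α q ^ s) * genBinom (α + (q : ℝ)) J ^ s) :=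
        mul_le_mul_of_nonneg_left key hc.le
    _ = _ := by
        linear_combination (-(A ^ q * ((q.factorial : ℝ) ^ s * genBinom α q ^ s) *
          genBinom (α + (q : ℝ)) J ^ s)) * rpow_split hr α J q

end NagumoAux

theorem nagumoNorm_momentDerivQ (N : ℕ) (s : Fin N → ℝ) (hs : ∀ d, 0 < s d)
    (m : Fin N → ℕ → ℝ) (hm : ∀ d, IsRegularMomentSeq (m d) (s d))
    (α : Fin N → ℝ) (hα : ∀ d, 1 ≤ α d) (q : Fin N → ℕ) :
    ∃ C : ℝ, 0 < C ∧
      ∀ (ρ : Fin N → ℝ), (∀ d, 0 < ρ d) →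
      ∀ f : (Fin N → ℕ) → ℂ, AnalyticCoeffs ρ f →
      ∀ r : ℝ, 0 < r → (∀ d, r < ρ d) →
        nagumoNorm (momentDerivQ m q f) (α + fun d => (q d : ℝ)) r s ≤
          C ^ (∑ d, q d) *
            (∏ d, ((q d).factorial : ℝ) ^ s d * genBinom (α d) (q d) ^ s d) *
            nagumoNorm f α r s := by
  classical
  choose aa AA haa hAA hbnd using fun d => (hm d).2.2
  have hm0 : ∀ d j, 0 < m d j := fun d => (hm d).2.1
  set C : ℝ := 1 + ∑ d, AA d with hCdef
  have hsum0 : 0 ≤ ∑ d, AA d := Finset.sum_nonneg fun d _ => (hAA d).le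
  have hC1 : 1 ≤ C := by rw [hCdef]; linarith
  have hC0 : 0 < C := lt_of_lt_of_le one_pos hC1
  have hAC : ∀ d, AA d ≤ C := fun d => by
    have h1 : AA d ≤ ∑ d, AA d := Finset.single_le_sum (fun d _ => (hAA d).le) (Finset.mem_univ d)
    rw [hCdef]; linarith
  refine ⟨C, hC0, ?_⟩
  intro ρ hρ f hf r hr hrρ
  rcases eq_or_ne N 0 with hN | hN
  · subst hN
    have hα0 : α = 0 := Subsingleton.elim _ _
    have hαq0 : (α + fun d => ((q d : ℕ) : ℝ)) = 0 := Subsingleton.elim _ _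
    simp only [nagumoNorm, if_pos hα0, if_pos hαq0]
    have habs : ∀ J : Fin 0 → ℕ, ‖momentDerivQ m q f J‖ = ‖f J‖ := by
      intro J
      have hJ : J + q = J := Subsingleton.elim _ _
      simp [momentDerivQ, hJ]
    simp [habs]
  · have hd0 : 0 < N := Nat.pos_of_ne_zero hN
    set d0 : Fin N := ⟨0, hd0⟩
    have hαne : α ≠ 0 := by
      intro h
      have h2 := congrFun h d0
      have h3 := hα d0
      simp only [Pi.zero_apply] at h2
      linarith
    have hαqne : (α + fun d => ((q d : ℕ) : ℝ)) ≠ 0 := by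
      intro h
      have h2 := congrFun h d0
      have h3 := hα d0
      have h4 : (0:ℝ) ≤ (q d0 : ℝ) := Nat.cast_nonneg _
      simp only [Pi.add_apply, Pi.zero_apply] at h2
      linarith
    simp only [nagumoNorm, if_neg hαne, if_neg hαqne]
    set T := nagumoSet f α r s with hTdef
    set S := nagumoSet (momentDerivQ m q f) (α + fun d => ((q d : ℕ) : ℝ)) r s with hSdef
    set K : ℝ := C ^ (∑ d, q d) *
        ∏ d, ((q d).factorial : ℝ) ^ s d * genBinom (α d) (q d) ^ s d with hKdef
    have hK0 : 0 < K := by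
      refine mul_pos (pow_pos hC0 _) (Finset.prod_pos fun d _ => mul_pos ?_ ?_)
      · exact Real.rpow_pos_of_pos (by exact_mod_cast (q d).factorial_pos) _
      · exact Real.rpow_pos_of_pos (genBinom_pos (lt_of_lt_of_le one_pos (hα d)) _) _
    -- T is nonempty
    have hsum := hf (fun _ => r) (fun _ => hr.le) (fun d => hrρ d)
    set M : ℝ := ∑' J : Fin N → ℕ, ‖f J‖ * ∏ d, r ^ J d with hMdef
    have hM0 : 0 ≤ M := tsum_nonneg fun J => by positivity
    have hMle : ∀ J : Fin N → ℕ, ‖f J‖ * ∏ d, r ^ J d ≤ M :=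
      fun J => Summable.le_tsum hsum J (fun b _ => by positivity)
    have hTne : T.Nonempty := by
      refine ⟨M * ∏ d, r ^ (α d), ?_, ?_⟩
      · exact mul_nonneg hM0 (Finset.prod_nonneg fun d _ => (Real.rpow_pos_of_pos hr _).le)
      · intro J
        have hP : (0:ℝ) < ∏ d, (r:ℝ) ^ J d := Finset.prod_pos fun d _ => pow_pos hr _
        have key : ‖f J‖ ≤ M * ∏ d, ((r:ℝ) ^ J d)⁻¹ := by
          rw [Finset.prod_inv_distrib, ← div_eq_mul_inv, le_div_iff₀ hP]
          exact hMle J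
        calc ‖f J‖ ≤ M * ∏ d, ((r:ℝ) ^ J d)⁻¹ := key
          _ ≤ M * ∏ d, genBinom (α d) (J d) ^ s d * ((r:ℝ) ^ J d)⁻¹ := by
              refine mul_le_mul_of_nonneg_left (Finset.prod_le_prod
                (fun d _ => (inv_pos.mpr (pow_pos hr _)).le) (fun d _ => ?_)) hM0
              nth_rewrite 1 [← one_mul (((r:ℝ) ^ J d)⁻¹)]
              refine mul_le_mul_of_nonneg_right ?_ (inv_pos.mpr (pow_pos hr _)).le
              exact Real.one_le_rpow (one_le_genBinom (hα d) _) (hs d).le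
          _ = (M * ∏ d, r ^ (α d)) * ∏ d, r ^ (-(α d)) * genBinom (α d) (J d) ^ s d * ((r:ℝ) ^ J d)⁻¹ := by
              rw [mul_assoc, ← Finset.prod_mul_distrib]
              congr 1
              refine Finset.prod_congr rfl fun d _ => ?_
              rw [← mul_assoc, ← mul_assoc, ← Real.rpow_add hr, add_neg_cancel, Real.rpow_zero,
                one_mul]
    have hSbdd : BddBelow S := ⟨0, fun x hx => hx.1⟩
    -- membership map
    have hmem : ∀ B ∈ T, K * B ∈ S := by
      intro B hB
      obtain ⟨hB0, hBle⟩ := hB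
      refine ⟨mul_nonneg hK0.le hB0, ?_⟩
      intro J
      simp only [Pi.add_apply]
      have hrat : (0:ℝ) ≤ ∏ d, m d (J d + q d) / m d (J d) :=
        Finset.prod_nonneg fun d _ => (div_pos (hm0 d _) (hm0 d _)).le
      have habs : ‖momentDerivQ m q f J‖
          = ‖f (J + q)‖ * ∏ d, m d (J d + q d) / m d (J d) := by
        rw [momentDerivQ, norm_mul, Complex.norm_real, Real.norm_eq_abs, abs_of_nonneg hrat]
      have hBJ := hBle (J + q)
      simp only [Pi.add_apply] at hBJ
      calc ‖momentDerivQ m q f J‖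
          = ‖f (J + q)‖ * ∏ d, m d (J d + q d) / m d (J d) := habs
        _ ≤ (B * ∏ d, r ^ (-(α d)) * genBinom (α d) (J d + q d) ^ s d * ((r:ℝ) ^ (J d + q d))⁻¹) *
              ∏ d, m d (J d + q d) / m d (J d) := mul_le_mul_of_nonneg_right hBJ hrat
        _ = B * ∏ d, (r ^ (-(α d)) * genBinom (α d) (J d + q d) ^ s d * ((r:ℝ) ^ (J d + q d))⁻¹) *
              (m d (J d + q d) / m d (J d)) := by
            rw [mul_assoc, ← Finset.prod_mul_distrib]
        _ ≤ B * ∏ d, (AA d ^ q d * (((q d).factorial : ℝ) ^ s d * genBinom (α d) (q d) ^ s d)) *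
              (r ^ (-(α d + (q d : ℝ))) * genBinom (α d + (q d : ℝ)) (J d) ^ s d * ((r:ℝ) ^ J d)⁻¹) := by
            refine mul_le_mul_of_nonneg_left (Finset.prod_le_prod (fun d _ => ?_) (fun d _ => ?_)) hB0
            · refine mul_nonneg (mul_nonneg (mul_nonneg ?_ ?_) ?_) ?_
              · exact (Real.rpow_pos_of_pos hr _).le
              · exact (Real.rpow_pos_of_pos (genBinom_pos (lt_of_lt_of_le one_pos (hα d)) _) _).le
              · exact (inv_pos.mpr (pow_pos hr _)).le
              · exact (div_pos (hm0 d _) (hm0 d _)).le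
            · exact coord_full (m d) (s d) (α d) (AA d) r (hs d).le (hα d) hr (hm0 d)
                (fun j => (hbnd d j).2) (J d) (q d)
        _ ≤ K * B * ∏ d, r ^ (-(α d + (q d : ℝ))) * genBinom (α d + (q d : ℝ)) (J d) ^ s d *
              ((r:ℝ) ^ J d)⁻¹ := by
            rw [Finset.prod_mul_distrib, Finset.prod_mul_distrib]
            have hprodA : ∏ d, AA d ^ q d ≤ C ^ (∑ d, q d) := by
              rw [← Finset.prod_pow_eq_pow_sum]
              exact Finset.prod_le_prod (fun d _ => pow_nonneg (hAA d).le _)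
                (fun d _ => pow_le_pow_left₀ (hAA d).le (hAC d) _)
            have hU : (0:ℝ) ≤ ∏ d, r ^ (-(α d + (q d : ℝ))) * genBinom (α d + (q d : ℝ)) (J d) ^ s d *
                ((r:ℝ) ^ J d)⁻¹ := by
              refine Finset.prod_nonneg fun d _ => ?_
              have h1 : (0:ℝ) < α d + (q d : ℝ) := by
                have := hα d; have h4 : (0:ℝ) ≤ (q d : ℝ) := Nat.cast_nonneg _; linarith
              refine mul_nonneg (mul_nonneg (Real.rpow_pos_of_pos hr _).le
                (Real.rpow_pos_of_pos (genBinom_pos h1 _) _).le) (inv_pos.mpr (pow_pos hr _)).le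
            have hF : (0:ℝ) ≤ ∏ d, ((q d).factorial : ℝ) ^ s d * genBinom (α d) (q d) ^ s d := by
              refine Finset.prod_nonneg fun d _ => mul_nonneg ?_ ?_
              · exact (Real.rpow_pos_of_pos (by exact_mod_cast (q d).factorial_pos) _).le
              · exact (Real.rpow_pos_of_pos (genBinom_pos (lt_of_lt_of_le one_pos (hα d)) _) _).le
            calc B * ((∏ d, AA d ^ q d) * (∏ d, ((q d).factorial : ℝ) ^ s d * genBinom (α d) (q d) ^ s d) *
                  ∏ d, r ^ (-(α d + (q d : ℝ))) * genBinom (α d + (q d : ℝ)) (J d) ^ s d * ((r:ℝ) ^ J d)⁻¹)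
                ≤ B * (C ^ (∑ d, q d) * (∏ d, ((q d).factorial : ℝ) ^ s d * genBinom (α d) (q d) ^ s d) *
                  ∏ d, r ^ (-(α d + (q d : ℝ))) * genBinom (α d + (q d : ℝ)) (J d) ^ s d * ((r:ℝ) ^ J d)⁻¹) := by
                  refine mul_le_mul_of_nonneg_left ?_ hB0
                  exact mul_le_mul_of_nonneg_right (mul_le_mul_of_nonneg_right hprodA hF) hU
              _ = K * B * ∏ d, r ^ (-(α d + (q d : ℝ))) * genBinom (α d + (q d : ℝ)) (J d) ^ s d *
                  ((r:ℝ) ^ J d)⁻¹ := by rw [hKdef]; ring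
    have hKB : ∀ B ∈ T, sInf S ≤ K * B := fun B hB => csInf_le hSbdd (hmem B hB)
    have hdiv : sInf S / K ≤ sInf T := by
      refine le_csInf hTne fun B hB => ?_
      rw [div_le_iff₀ hK0]
      exact (hKB B hB).trans (le_of_eq (mul_comm K B))
    have := (div_le_iff₀ hK0).mp hdiv
    calc sInf S ≤ sInf T * K := this
      _ = K * sInf T := mul_comm _ _
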